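/- (Theorem 1 of the paper.) Let P k = (A k) ⊗ₖ (1 : Matrix (Fin dB) (Fin dB) ℂ), let T : ι → Matrix (Fin dE) (Fin dE) ℂ be a family of unitary matrices ((T k) * (T k)ᴴ = 1 = (T k)ᴴ * (T k)), and set U = ∑ k, (P k) ⊗ₖ (T k), a matrix on ((Fin dA × Fin dB) × Fin dE). Then for every matrix ρ on (Fin dA × Fin dB), U * (Φ_A(ρ) ⊗ₖ ((1/dE : ℂ) • 1)) * Uᴴ = Φ_A(ρ) ⊗ₖ ((1/dE : ℂ) • 1); i.e., U commutes with Φ_A(ρ) ⊗ₖ (𝟙_E/dE). -/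

import Mathlib

open Matrix Kronecker BigOperators

/-- The unrevealed-measurement (pinching) map on the bipartite system:
`Φ_A(ρ) = ∑ i, (A i ⊗ₖ 1) * ρ * (A i ⊗ₖ 1)`. -/
noncomputable def pinch {dA dB : ℕ} {ι : Type*} [Fintype ι]
    (A : ι → Matrix (Fin dA) (Fin dA) ℂ)
    (ρ : Matrix (Fin dA × Fin dB) (Fin dA × Fin dB) ℂ) :
    Matrix (Fin dA × Fin dB) (Fin dA × Fin dB) ℂ :=
  ∑ i, ((A i) ⊗ₖ (1 : Matrix (Fin dB) (Fin dB) ℂ)) * ρ *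
    ((A i) ⊗ₖ (1 : Matrix (Fin dB) (Fin dB) ℂ))

lemma kron_conjT {m n p q : Type*} (M : Matrix m n ℂ) (N : Matrix p q ℂ) :
    (M ⊗ₖ N)ᴴ = Mᴴ ⊗ₖ Nᴴ := by
  ext ⟨i, j⟩ ⟨k, l⟩
  simp [conjTranspose_apply, kroneckerMap_apply]

lemma sum_kron {m n p q ι : Type*} (s : Finset ι) (f : ι → Matrix m n ℂ) (B : Matrix p q ℂ) :
    (∑ i ∈ s, f i) ⊗ₖ B = ∑ i ∈ s, (f i) ⊗ₖ B := by
  ext ⟨i, j⟩ ⟨k, l⟩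
  simp [kroneckerMap_apply, Matrix.sum_apply, Finset.sum_mul]

/-- Theorem 1 of the paper: the Stinespring unitary `U = ∑ k, P k ⊗ₖ T k` commutes with
`Φ_A(ρ) ⊗ₖ (𝟙_E / dE)`. -/
theorem stinespring_unitary_commutes {dA dB dE : ℕ} {ι : Type*} [Fintype ι] [DecidableEq ι]
    (A : ι → Matrix (Fin dA) (Fin dA) ℂ)
    (hproj : ∀ i j, A i * A j = if i = j then A i else 0)
    (hherm : ∀ i, (A i)ᴴ = A i)
    (hsum : ∑ i, A i = 1)
    (T : ι → Matrix (Fin dE) (Fin dE) ℂ)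
    (hT : ∀ k, (T k) * (T k)ᴴ = 1 ∧ (T k)ᴴ * (T k) = 1)
    (U : Matrix ((Fin dA × Fin dB) × Fin dE) ((Fin dA × Fin dB) × Fin dE) ℂ)
    (hU : U = ∑ k, (((A k) ⊗ₖ (1 : Matrix (Fin dB) (Fin dB) ℂ)) ⊗ₖ (T k)))
    (ρ : Matrix (Fin dA × Fin dB) (Fin dA × Fin dB) ℂ) :
    U * ((pinch A ρ) ⊗ₖ ((1 / (dE : ℂ)) • (1 : Matrix (Fin dE) (Fin dE) ℂ))) * Uᴴ
      = (pinch A ρ) ⊗ₖ ((1 / (dE : ℂ)) • (1 : Matrix (Fin dE) (Fin dE) ℂ)) := by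
  set c : ℂ := 1 / (dE : ℂ) with hc
  set P : ι → Matrix (Fin dA × Fin dB) (Fin dA × Fin dB) ℂ :=
    fun k => (A k) ⊗ₖ (1 : Matrix (Fin dB) (Fin dB) ℂ) with hPdef
  have hP : ∀ k l, P k * P l = if k = l then P k else 0 := by
    intro k l
    simp only [hPdef, ← Matrix.mul_kronecker_mul, Matrix.one_mul, hproj]
    split <;> simp
  have hpinchP : ∀ l, pinch A ρ * P l = P l * ρ * P l := by
    intro l
    rw [pinch, Finset.sum_mul]
    rw [Finset.sum_eq_single l]
    · rw [Matrix.mul_assoc, hP l l]; simp; rfl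
    · intro i _ hil
      rw [Matrix.mul_assoc, hP i l, if_neg hil, Matrix.mul_zero]
    · intro h; exact absurd (Finset.mem_univ l) h
  have key : ∀ k l, P k * (pinch A ρ * P l) = if k = l then P k * ρ * P k else 0 := by
    intro k l
    rw [hpinchP l, ← Matrix.mul_assoc, ← Matrix.mul_assoc, hP k l]
    split
    · next h => subst h; rfl
    · simp
  -- rewrite U and Uᴴ as sums
  have hUH : Uᴴ = ∑ l, (P l ⊗ₖ (T l)ᴴ) := by
    rw [hU, Matrix.conjTranspose_sum]
    refine Finset.sum_congr rfl fun l _ => ?_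
    rw [kron_conjT, kron_conjT, hherm, Matrix.conjTranspose_one]
  rw [hUH, hU]
  have hterm : ∀ k, (P k ⊗ₖ T k) * ((pinch A ρ) ⊗ₖ (c • (1 : Matrix (Fin dE) (Fin dE) ℂ)))
      = (P k * pinch A ρ) ⊗ₖ (c • T k) := by
    intro k
    rw [← Matrix.mul_kronecker_mul]
    congr 1
    rw [Matrix.mul_smul, Matrix.mul_one]
  calc (∑ k, (P k ⊗ₖ T k)) * ((pinch A ρ) ⊗ₖ (c • (1 : Matrix (Fin dE) (Fin dE) ℂ))) *
        (∑ l, (P l ⊗ₖ (T l)ᴴ))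
      = ∑ k, ∑ l, ((P k * (pinch A ρ * P l)) ⊗ₖ (c • (T k * (T l)ᴴ))) := by
        rw [Finset.sum_mul, Finset.sum_mul]
        refine Finset.sum_congr rfl fun k _ => ?_
        rw [Finset.mul_sum]
        refine Finset.sum_congr rfl fun l _ => ?_
        rw [hterm, ← Matrix.mul_kronecker_mul, Matrix.mul_assoc, Matrix.smul_mul]
    _ = ∑ k, ((P k * ρ * P k) ⊗ₖ (c • (1 : Matrix (Fin dE) (Fin dE) ℂ))) := by
        refine Finset.sum_congr rfl fun k _ => ?_
        rw [Finset.sum_eq_single k]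
        · rw [key k k, if_pos rfl, (hT k).1]
        · intro l _ hlk
          rw [key k l, if_neg (fun h => hlk h.symm)]
          simp [Matrix.zero_kronecker]
        · intro h; exact absurd (Finset.mem_univ k) h
    _ = (pinch A ρ) ⊗ₖ (c • (1 : Matrix (Fin dE) (Fin dE) ℂ)) := by
        rw [pinch, sum_kron]
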